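/- Let k ≥ 1 and let G be obtained from the complete graph K_{k+2} on vertices {u, v, x₁, …, x_k} by attaching a pendant leaf y_i to x_i for each i ∈ [k]. Then γ_g^t(G) = γ_g^t(G − v) = k + 1 and γ_g^t'(G) = γ_g^t'(G − v) = k + 1. -/

import Mathlib

open Finset

open scoped Classical

variable {V : Type*} [Fintype V]

/-- The set of neighbors of `v` (the vertices that `v` totally dominates). -/
noncomputable def nbr (G : SimpleGraph V) (v : V) : Finset V :=
  Finset.univ.filter (G.Adj v)

/-- The legal moves, given that the vertices of `D` are already totally dominated:
a vertex is playable iff it totally dominates at least one vertex outside `D`. -/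
noncomputable def movesF (G : SimpleGraph V) (D : Finset V) : Finset V :=
  Finset.univ.filter fun v => ¬ nbr G v ⊆ D

lemma movesF_card (G : SimpleGraph V) (D : Finset V) {v : V} (hv : v ∈ movesF G D) :
    ((univ : Finset V) \ (D ∪ nbr G v)).card < ((univ : Finset V) \ D).card := by
  simp only [movesF, mem_filter] at hv
  obtain ⟨u, hu, hu2⟩ := Finset.not_subset.mp hv.2
  apply Finset.card_lt_card
  constructor
  · exact Finset.sdiff_subset_sdiff le_rfl Finset.subset_union_left
  · intro hsub
    have h1 : u ∈ (univ : Finset V) \ D := by simp [hu2]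
    have h2 := hsub h1
    simp only [mem_sdiff, mem_univ, true_and, Finset.mem_union] at h2
    exact h2 (Or.inr hu)

/-- Optimal number of moves in the total domination game on `G` with the vertices of `D`
already totally dominated; `turn = true` means Dominator (the minimizer) moves next,
`turn = false` means Staller (the maximizer) moves next.  The game ends when no legal
move remains (for graphs without isolated vertices this means every vertex is totally
dominated). -/
noncomputable def gtVal (G : SimpleGraph V) (turn : Bool) (D : Finset V) : ℕ :=
  if h : (movesF G D).Nonempty then
    if turn then
      1 + ((movesF G D).attach.inf' (by simpa using h)
        fun v => gtVal G false (D ∪ nbr G v.1))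
    else
      1 + ((movesF G D).attach.sup' (by simpa using h)
        fun v => gtVal G true (D ∪ nbr G v.1))
  else 0
termination_by ((univ : Finset V) \ D).card
decreasing_by
  · exact movesF_card G D v.2
  · exact movesF_card G D v.2

/-- The game total domination number `γ_g^t(G|D)` (Dominator-start, `D` predominated). -/
noncomputable def gtD (G : SimpleGraph V) (D : Finset V := ∅) : ℕ := gtVal G true D

/-- The Staller-start game total domination number `γ_g^t'(G|D)`. -/
noncomputable def gtS (G : SimpleGraph V) (D : Finset V := ∅) : ℕ := gtVal G false D

/-- `G` has no isolated vertices. -/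
def NoIsolated (G : SimpleGraph V) : Prop := ∀ v : V, ∃ w, G.Adj v w

/-- The graph obtained from the complete graph `K_{k+2}` on `{u, v, x₁, …, x_k}`
(here `u = 0`, `v = 1`, `xᵢ = 1 + i` for `i = 1, …, k`) by attaching a pendant leaf `yᵢ = xᵢ + k`
to `xᵢ` for each `i ∈ [k]`. -/
def cliqueWithLeaves (k : ℕ) : SimpleGraph (Fin (2 * k + 2)) :=
  SimpleGraph.fromRel (fun a b =>
    ((a : ℕ) < k + 2 ∧ (b : ℕ) < k + 2) ∨
    ((b : ℕ) = (a : ℕ) + k ∧ 2 ≤ (a : ℕ) ∧ (a : ℕ) < k + 2))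

/-! ### Auxiliary machinery: a generic "clique with pendant leaves" model

We analyse graphs described by a labeling `lab : V → ℕ` which is a bijection onto
`[0, c+m)`, where `[0,c)` is a clique and each `i ∈ [c-m, c)` has a pendant leaf
labeled `i + m`. -/

section CliqueLeafModel

variable {c m : ℕ} {lab : V → ℕ}

/-- All leaves dominated (μ = 0). -/
def AllL (c : ℕ) (lab : V → ℕ) (D : Finset V) : Prop := ∀ v, c ≤ lab v → v ∈ D
/-- All clique vertices dominated (q = 0). -/
def CSub (c : ℕ) (lab : V → ℕ) (D : Finset V) : Prop := ∀ v, lab v < c → v ∈ D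
/-- No clique vertex dominated (q = |C|). -/
def CEmp (c : ℕ) (lab : V → ℕ) (D : Finset V) : Prop := ∀ v, lab v < c → v ∉ D
/-- At most one undominated clique vertex (q ≤ 1). -/
def Q1 (c : ℕ) (lab : V → ℕ) (D : Finset V) : Prop :=
  ∀ v w, lab v < c → v ∉ D → lab w < c → w ∉ D → v = w
/-- Every undominated leaf has an undominated support (b = μ). -/
def BigB (c m : ℕ) (lab : V → ℕ) (D : Finset V) : Prop :=
  ∀ v, c ≤ lab v → v ∉ D → ∀ u, lab u + m = lab v → u ∉ D
/-- Some undominated support vertex has a dominated leaf (s ≥ 1). -/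
def Spos (c m : ℕ) (lab : V → ℕ) (D : Finset V) : Prop :=
  ∃ x, lab x < c ∧ c ≤ lab x + m ∧ x ∉ D ∧ ∀ u, lab u = lab x + m → u ∈ D
/-- Every support vertex is dominated (b + s = 0). -/
def AllX (c m : ℕ) (lab : V → ℕ) (D : Finset V) : Prop :=
  ∀ x, lab x < c → c ≤ lab x + m → x ∈ D

/-- Number of undominated leaves. -/
noncomputable def muL (c : ℕ) (lab : V → ℕ) (D : Finset V) : ℕ :=
  (Finset.univ.filter fun v => c ≤ lab v ∧ v ∉ D).card

/-- Upper bound for the Dominator-to-move value (also a lower bound). -/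
noncomputable def hTf (c m : ℕ) (lab : V → ℕ) (D : Finset V) : ℕ :=
  if AllL c lab D then (if CSub c lab D then 0 else if CEmp c lab D then 2 else 1)
  else muL c lab D + (if BigB c m lab D then 1 else 0)

/-- Upper bound for the Staller-to-move value. -/
noncomputable def hFf (c m : ℕ) (lab : V → ℕ) (D : Finset V) : ℕ :=
  if AllL c lab D then (if CSub c lab D then 0 else if Q1 c lab D then 1 else 2)
  else if CSub c lab D then muL c lab D
  else if BigB c m lab D ∧ Spos c m lab D then muL c lab D + 2 else muL c lab D + 1

/-- Lower bound for the Staller-to-move value. -/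
noncomputable def lFf (c m : ℕ) (lab : V → ℕ) (D : Finset V) : ℕ :=
  if AllL c lab D then (if CSub c lab D then 0 else if Q1 c lab D then 1 else 2)
  else if AllX c m lab D ∧ Q1 c lab D then muL c lab D else muL c lab D + 1

variable {G : SimpleGraph V}

lemma mem_nbr {w u : V} : u ∈ nbr G w ↔ G.Adj w u := by simp [nbr]

lemma mem_unbr {D : Finset V} {w u : V} : u ∈ D ∪ nbr G w ↔ u ∈ D ∨ G.Adj w u := by
  simp [nbr]

lemma mem_movesF {D : Finset V} {w : V} :
    w ∈ movesF G D ↔ ∃ u, G.Adj w u ∧ u ∉ D := by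
  simp only [movesF, mem_filter, mem_univ, true_and, Finset.not_subset]
  constructor
  · rintro ⟨u, hu, hu2⟩; exact ⟨u, mem_nbr.mp hu, hu2⟩
  · rintro ⟨u, hu, hu2⟩; exact ⟨u, mem_nbr.mpr hu, hu2⟩

lemma muL_zero_iff {D : Finset V} : muL c lab D = 0 ↔ AllL c lab D := by
  simp only [muL, Finset.card_eq_zero, Finset.filter_eq_empty_iff, mem_univ, true_implies,
    AllL, not_and, not_not]

lemma muL_pos {D : Finset V} (h : ¬ AllL c lab D) : 1 ≤ muL c lab D := by
  rcases Nat.eq_zero_or_pos (muL c lab D) with h0 | h1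
  · exact absurd (muL_zero_iff.mp h0) h
  · exact h1

lemma muL_mono {D E : Finset V} (h : D ⊆ E) : muL c lab E ≤ muL c lab D := by
  apply Finset.card_le_card
  intro v hv
  simp only [mem_filter, mem_univ, true_and] at hv ⊢
  exact ⟨hv.1, fun hvD => hv.2 (h hvD)⟩

end CliqueLeafModel

section CliqueLeafMain

variable {c m : ℕ} {lab : V → ℕ} {G : SimpleGraph V}
variable (hm : 1 ≤ m) (hc : m + 1 ≤ c)
variable (hinj : Function.Injective lab)
variable (hlt : ∀ v, lab v < c + m)
variable (hsurj : ∀ i, i < c + m → ∃ v, lab v = i)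
variable (hadj : ∀ a b, G.Adj a b ↔
    ((lab a < c ∧ lab b < c ∧ lab a ≠ lab b) ∨
     (lab b = lab a + m ∧ c ≤ lab b) ∨ (lab a = lab b + m ∧ c ≤ lab a)))

include hadj in
/-- μ dichotomy: either the move `w` dominates a (unique) new leaf, or μ is unchanged. -/
lemma muL_dichot (hinj : Function.Injective lab) (hlt : ∀ v, lab v < c + m)
    (D : Finset V) (w : V) :
    (∃ v, c ≤ lab v ∧ lab v = lab w + m ∧ v ∉ D ∧
        muL c lab (D ∪ nbr G w) + 1 = muL c lab D) ∨
    ((∀ v, c ≤ lab v → lab v = lab w + m → v ∈ D) ∧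
        muL c lab (D ∪ nbr G w) = muL c lab D) := by
  have hadjleaf : ∀ z, c ≤ lab z → (G.Adj w z ↔ lab z = lab w + m) := by
    intro z hz
    rw [hadj]
    constructor
    · rintro (⟨_, h2, _⟩ | ⟨h1, _⟩ | ⟨h1, h2⟩)
      · omega
      · exact h1
      · have := hlt w; have := hlt z; omega
    · intro h; exact Or.inr (Or.inl ⟨h, hz⟩)
  by_cases hex : ∃ v, c ≤ lab v ∧ lab v = lab w + m ∧ v ∉ D
  · left
    obtain ⟨v, hv1, hv2, hv3⟩ := hex
    refine ⟨v, hv1, hv2, hv3, ?_⟩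
    have hfe : (Finset.univ.filter fun z => c ≤ lab z ∧ z ∉ D ∪ nbr G w)
        = (Finset.univ.filter fun z => c ≤ lab z ∧ z ∉ D).erase v := by
      ext z
      simp only [mem_filter, mem_univ, true_and, Finset.mem_erase, mem_unbr]
      constructor
      · rintro ⟨hz1, hz2⟩
        push_neg at hz2
        refine ⟨fun hzv => ?_, hz1, hz2.1⟩
        subst hzv
        exact hz2.2 ((hadjleaf z hz1).mpr hv2)
      · rintro ⟨hzv, hz1, hz2⟩
        refine ⟨hz1, ?_⟩
        rintro (h | h)
        · exact hz2 h
        · have := (hadjleaf z hz1).mp h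
          exact hzv (hinj (by omega))
    have hvmem : v ∈ Finset.univ.filter fun z => c ≤ lab z ∧ z ∉ D := by
      simp [hv1, hv3]
    rw [muL, muL, hfe, Finset.card_erase_of_mem hvmem]
    have : 0 < (Finset.univ.filter fun z => c ≤ lab z ∧ z ∉ D).card :=
      Finset.card_pos.mpr ⟨v, hvmem⟩
    omega
  · right
    push_neg at hex
    refine ⟨hex, ?_⟩
    · rw [muL, muL]
      congr 1
      ext z
      simp only [mem_filter, mem_univ, true_and, mem_unbr, not_or]
      constructor
      · rintro ⟨hz1, hz2, _⟩; exact ⟨hz1, hz2⟩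
      · rintro ⟨hz1, hz2⟩
        exact ⟨hz1, hz2, fun h => hz2 (hex z hz1 ((hadjleaf z hz1).mp h))⟩

lemma gtVal_true_eq {G : SimpleGraph V} {D : Finset V} (h : (movesF G D).Nonempty) :
    gtVal G true D = 1 + ((movesF G D).attach.inf' (by simpa using h)
      fun v => gtVal G false (D ∪ nbr G v.1)) := by
  rw [gtVal]; simp [h]

lemma gtVal_false_eq {G : SimpleGraph V} {D : Finset V} (h : (movesF G D).Nonempty) :
    gtVal G false D = 1 + ((movesF G D).attach.sup' (by simpa using h)
      fun v => gtVal G true (D ∪ nbr G v.1)) := by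
  rw [gtVal]; simp [h]

lemma gtVal_empty {G : SimpleGraph V} {D : Finset V} (h : ¬ (movesF G D).Nonempty)
    (t : Bool) : gtVal G t D = 0 := by
  rw [gtVal]; simp [h]

section CliqueLeafMain2

variable {c m : ℕ} {lab : V → ℕ} {G : SimpleGraph V}

/-- Adjacency of two distinct clique vertices. -/
lemma adj_clique (hadj : ∀ a b, G.Adj a b ↔
      ((lab a < c ∧ lab b < c ∧ lab a ≠ lab b) ∨
       (lab b = lab a + m ∧ c ≤ lab b) ∨ (lab a = lab b + m ∧ c ≤ lab a)))
    {a b : V} (ha : lab a < c) (hb : lab b < c) (hne : lab a ≠ lab b) : G.Adj a b :=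
  (hadj a b).mpr (Or.inl ⟨ha, hb, hne⟩)

/-- Adjacency of a support vertex and its leaf. -/
lemma adj_leaf (hadj : ∀ a b, G.Adj a b ↔
      ((lab a < c ∧ lab b < c ∧ lab a ≠ lab b) ∨
       (lab b = lab a + m ∧ c ≤ lab b) ∨ (lab a = lab b + m ∧ c ≤ lab a)))
    {a b : V} (h : lab b = lab a + m) (hb : c ≤ lab b) : G.Adj a b :=
  (hadj a b).mpr (Or.inr (Or.inl ⟨h, hb⟩))

/-- A clique vertex move dominates every other clique vertex. -/
lemma clique_cover (hadj : ∀ a b, G.Adj a b ↔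
      ((lab a < c ∧ lab b < c ∧ lab a ≠ lab b) ∨
       (lab b = lab a + m ∧ c ≤ lab b) ∨ (lab a = lab b + m ∧ c ≤ lab a)))
    {D : Finset V} {w : V} (hw : lab w < c) {z : V} (hz : lab z < c)
    (hne : lab z ≠ lab w) : z ∈ D ∪ nbr G w :=
  mem_unbr.mpr (Or.inr (adj_clique hadj hw hz (Ne.symm hne)))

/-- If the game is over, everything is dominated. -/
lemma endgame (hm : 1 ≤ m) (hc : m + 1 ≤ c)
    (hsurj : ∀ i, i < c + m → ∃ v, lab v = i)
    (hlt : ∀ v, lab v < c + m)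
    (hadj : ∀ a b, G.Adj a b ↔
      ((lab a < c ∧ lab b < c ∧ lab a ≠ lab b) ∨
       (lab b = lab a + m ∧ c ≤ lab b) ∨ (lab a = lab b + m ∧ c ≤ lab a)))
    {D : Finset V} (h : ¬ (movesF G D).Nonempty) :
    AllL c lab D ∧ CSub c lab D := by
  have hnb : ∀ w u, G.Adj w u → u ∈ D := by
    intro w u hadj'
    by_contra hu
    exact h ⟨w, mem_movesF.mpr ⟨u, hadj', hu⟩⟩
  constructor
  · intro v hv
    obtain ⟨x, hx⟩ := hsurj (lab v - m) (by have := hlt v; omega)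
    have hxv : lab v = lab x + m := by omega
    exact hnb x v (adj_leaf hadj hxv hv)
  · intro v hv
    rcases Nat.eq_zero_or_pos (lab v) with h0 | h1
    · obtain ⟨z, hz⟩ := hsurj 1 (by omega)
      exact hnb z v (adj_clique hadj (by omega) hv (by omega))
    · obtain ⟨z, hz⟩ := hsurj 0 (by omega)
      exact hnb z v (adj_clique hadj (by omega) hv (by omega))

lemma AllL_mono {D E : Finset V} (h : AllL c lab D) : AllL c lab (D ∪ E) :=
  fun v hv => Finset.mem_union_left _ (h v hv)

lemma CSub_mono {D E : Finset V} (h : CSub c lab D) : CSub c lab (D ∪ E) :=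
  fun v hv => Finset.mem_union_left _ (h v hv)

/-- Adjacency from a clique vertex to a leaf forces the leaf relation. -/
lemma adj_shape (hlt : ∀ v, lab v < c + m)
    (hadj : ∀ a b, G.Adj a b ↔
      ((lab a < c ∧ lab b < c ∧ lab a ≠ lab b) ∨
       (lab b = lab a + m ∧ c ≤ lab b) ∨ (lab a = lab b + m ∧ c ≤ lab a)))
    {w u : V} (h : G.Adj w u) (hu : c ≤ lab u) : lab u = lab w + m := by
  rcases (hadj w u).mp h with ⟨_, h2, _⟩ | ⟨h1, _⟩ | ⟨h1, h2⟩
  · omega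
  · exact h1
  · have := hlt w; have := hlt u; omega

/-- Adjacency from a leaf forces the support relation. -/
lemma adj_shape' (hlt : ∀ v, lab v < c + m)
    (hadj : ∀ a b, G.Adj a b ↔
      ((lab a < c ∧ lab b < c ∧ lab a ≠ lab b) ∨
       (lab b = lab a + m ∧ c ≤ lab b) ∨ (lab a = lab b + m ∧ c ≤ lab a)))
    {w u : V} (h : G.Adj w u) (hw : c ≤ lab w) : lab w = lab u + m := by
  rcases (hadj w u).mp h with ⟨h1, _, _⟩ | ⟨h1, h2⟩ | ⟨h1, _⟩
  · omega
  · have := hlt w; have := hlt u; omega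
  · exact h1

/-- **Upper bound** for the game values. -/
lemma UB (hm : 1 ≤ m) (hc : m + 1 ≤ c)
    (hinj : Function.Injective lab)
    (hlt : ∀ v, lab v < c + m)
    (hsurj : ∀ i, i < c + m → ∃ v, lab v = i)
    (hadj : ∀ a b, G.Adj a b ↔
      ((lab a < c ∧ lab b < c ∧ lab a ≠ lab b) ∨
       (lab b = lab a + m ∧ c ≤ lab b) ∨ (lab a = lab b + m ∧ c ≤ lab a))) :
    ∀ n (D : Finset V), ((univ : Finset V) \ D).card < n →
      gtVal G true D ≤ hTf c m lab D ∧ gtVal G false D ≤ hFf c m lab D := by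
  intro n
  induction n with
  | zero => intro D h; omega
  | succ n ih =>
    intro D hD
    by_cases hne : (movesF G D).Nonempty
    swap
    · constructor <;> simp [gtVal_empty hne]
    have hIH : ∀ w, w ∈ movesF G D →
        gtVal G true (D ∪ nbr G w) ≤ hTf c m lab (D ∪ nbr G w) ∧
        gtVal G false (D ∪ nbr G w) ≤ hFf c m lab (D ∪ nbr G w) := by
      intro w hw
      exact ih _ (by have := movesF_card G D hw; omega)
    have keyT : ∀ w₀, w₀ ∈ movesF G D → ∀ B : ℕ,
        hFf c m lab (D ∪ nbr G w₀) ≤ B → gtVal G true D ≤ 1 + B := by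
      intro w₀ hw₀ B hB
      rw [gtVal_true_eq hne]
      have h1 : ((movesF G D).attach.inf' (by simpa using hne)
          fun v => gtVal G false (D ∪ nbr G v.1)) ≤ gtVal G false (D ∪ nbr G w₀) :=
        Finset.inf'_le _ (Finset.mem_attach _ ⟨w₀, hw₀⟩)
      have h2 := (hIH w₀ hw₀).2
      omega
    have keyF : ∀ B : ℕ, 1 ≤ B →
        (∀ w, w ∈ movesF G D → hTf c m lab (D ∪ nbr G w) + 1 ≤ B) →
        gtVal G false D ≤ B := by
      intro B hB1 hall
      rw [gtVal_false_eq hne]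
      have hs : ((movesF G D).attach.sup' (by simpa using hne)
          fun v => gtVal G true (D ∪ nbr G v.1)) ≤ B - 1 := by
        apply Finset.sup'_le
        intro v _
        have h1 := (hIH v.1 v.2).1
        have h2 := hall v.1 v.2
        omega
      omega
    constructor
    · -- Dominator to move
      by_cases hA : AllL c lab D
      · by_cases hCS : CSub c lab D
        · -- no moves possible: contradiction
          obtain ⟨w, hw⟩ := hne
          obtain ⟨u, hu1, hu2⟩ := mem_movesF.mp hw
          rcases lt_or_ge (lab u) c with h | h
          · exact absurd (hCS u h) hu2
          · exact absurd (hA u h) hu2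
        · by_cases hCE : CEmp c lab D
          · -- value 2 : play the support vertex labeled c-1
            obtain ⟨x, hx⟩ := hsurj (c - 1) (by omega)
            obtain ⟨z, hz⟩ := hsurj 0 (by omega)
            have hxz : G.Adj x z := adj_clique hadj (by omega) (by omega) (by omega)
            have hw₀ : x ∈ movesF G D := mem_movesF.mpr ⟨z, hxz, hCE z (by omega)⟩
            have hA' : AllL c lab (D ∪ nbr G x) := AllL_mono hA
            have hQ1' : Q1 c lab (D ∪ nbr G x) := by
              intro v w' hv hv2 hw' hw2
              have hvx : v = x := by
                by_contra hne'
                exact hv2 (clique_cover hadj (by omega) hv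
                  (fun h => hne' (hinj (by omega))))
              have hwx : w' = x := by
                by_contra hne'
                exact hw2 (clique_cover hadj (by omega) hw'
                  (fun h => hne' (hinj (by omega))))
              rw [hvx, hwx]
            have hb : hFf c m lab (D ∪ nbr G x) ≤ 1 := by
              rw [hFf, if_pos hA']
              by_cases h2 : CSub c lab (D ∪ nbr G x)
              · rw [if_pos h2]; omega
              · rw [if_neg h2, if_pos hQ1']
            have := keyT x hw₀ 1 hb
            rw [hTf, if_pos hA, if_neg hCS, if_pos hCE]
            omega
          · -- value 1 : play a dominated clique vertex
            unfold CEmp at hCE; unfold CSub at hCS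
            push_neg at hCE hCS
            obtain ⟨v₁, hv₁c, hv₁D⟩ := hCE
            obtain ⟨v₂, hv₂c, hv₂D⟩ := hCS
            have hne12 : lab v₁ ≠ lab v₂ := fun h => hv₂D (hinj h ▸ hv₁D)
            have hw₀ : v₁ ∈ movesF G D :=
              mem_movesF.mpr ⟨v₂, adj_clique hadj hv₁c hv₂c hne12, hv₂D⟩
            have hA' : AllL c lab (D ∪ nbr G v₁) := AllL_mono hA
            have hCS' : CSub c lab (D ∪ nbr G v₁) := by
              intro z hz
              by_cases hzv : lab z = lab v₁
              · exact Finset.mem_union_left _ (hinj hzv ▸ hv₁D)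
              · exact clique_cover hadj hv₁c hz hzv
            have hb : hFf c m lab (D ∪ nbr G v₁) ≤ 0 := by
              rw [hFf, if_pos hA', if_pos hCS']
            have := keyT v₁ hw₀ 0 hb
            rw [hTf, if_pos hA, if_neg (by unfold CSub; push_neg; exact ⟨v₂, hv₂c, hv₂D⟩),
              if_neg (by unfold CEmp; push_neg; exact ⟨v₁, hv₁c, hv₁D⟩)]
            omega
      · -- some leaf undominated
        have hmu1 : 1 ≤ muL c lab D := muL_pos hA
        unfold AllL at hA; push_neg at hA
        obtain ⟨l, hlc, hlD⟩ := hA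
        by_cases hB : BigB c m lab D
        · -- value μ+1 : play the support of l
          obtain ⟨x, hx⟩ := hsurj (lab l - m) (by have := hlt l; omega)
          have hxm : lab x + m = lab l := by omega
          have hxc : lab x < c := by have := hlt l; omega
          have hw₀ : x ∈ movesF G D :=
            mem_movesF.mpr ⟨l, adj_leaf hadj (by omega) hlc, hlD⟩
          have hlD' : l ∈ D ∪ nbr G x :=
            mem_unbr.mpr (Or.inr (adj_leaf hadj (by omega) hlc))
          have hbound : hFf c m lab (D ∪ nbr G x) ≤ muL c lab D := by
            by_cases hA' : AllL c lab (D ∪ nbr G x)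
            · rw [hFf, if_pos hA']
              have hQ1' : Q1 c lab (D ∪ nbr G x) := by
                intro v w' hv hv2 hw' hw2
                have hvx : v = x := by
                  by_contra hne'
                  exact hv2 (clique_cover hadj hxc hv (fun h => hne' (hinj (by omega))))
                have hwx : w' = x := by
                  by_contra hne'
                  exact hw2 (clique_cover hadj hxc hw' (fun h => hne' (hinj (by omega))))
                rw [hvx, hwx]
              by_cases h2 : CSub c lab (D ∪ nbr G x)
              · rw [if_pos h2]; omega
              · rw [if_neg h2, if_pos hQ1']; omega
            · have hnB' : ¬ BigB c m lab (D ∪ nbr G x) := by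
                intro hB'
                have hA'' := hA'
                unfold AllL at hA''; push_neg at hA''
                obtain ⟨l2, hl2c, hl2D⟩ := hA''
                obtain ⟨x2, hx2⟩ := hsurj (lab l2 - m) (by have := hlt l2; omega)
                have hx2m : lab x2 + m = lab l2 := by omega
                have hx2c : lab x2 < c := by have := hlt l2; omega
                have hx2D' := hB' l2 hl2c hl2D x2 hx2m
                by_cases h : lab x2 = lab x
                · have : lab l2 = lab l := by omega
                  exact hl2D (hinj this ▸ hlD')
                · exact hx2D' (clique_cover hadj hxc hx2c h)
              rcases muL_dichot hadj hinj hlt D x with ⟨v', hv'1, hv'2, hv'3, hveq⟩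
                | ⟨hall, _⟩
              · rw [hFf, if_neg hA']
                split_ifs with h1 h2
                · omega
                · exact absurd h2.1 hnB'
                · omega
              · exact absurd (hall l hlc (by omega)) hlD
          have := keyT x hw₀ (muL c lab D) hbound
          rw [hTf, if_neg (by unfold AllL; push_neg; exact ⟨l, hlc, hlD⟩), if_pos hB]
          omega
        · -- value μ : play a dominated support with undominated leaf
          unfold BigB at hB; push_neg at hB
          obtain ⟨v, hvc, hvD, u, hum, huD⟩ := hB
          have huc : lab u < c := by have := hlt v; omega
          have hw₀ : u ∈ movesF G D :=
            mem_movesF.mpr ⟨v, adj_leaf hadj (by omega) hvc, hvD⟩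
          have hCS' : CSub c lab (D ∪ nbr G u) := by
            intro z hz
            by_cases hzv : lab z = lab u
            · exact Finset.mem_union_left _ (hinj hzv ▸ huD)
            · exact clique_cover hadj huc hz hzv
          rcases muL_dichot hadj hinj hlt D u with ⟨v', hv'1, hv'2, hv'3, hveq⟩
            | ⟨hall, _⟩
          · have hbound : hFf c m lab (D ∪ nbr G u) ≤ muL c lab (D ∪ nbr G u) := by
              by_cases hA' : AllL c lab (D ∪ nbr G u)
              · rw [hFf, if_pos hA', if_pos hCS']; omega
              · rw [hFf, if_neg hA', if_pos hCS']
            have := keyT u hw₀ (muL c lab (D ∪ nbr G u)) hbound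
            have hnB : ¬ BigB c m lab D := by
              unfold BigB; push_neg; exact ⟨v, hvc, hvD, u, hum, huD⟩
            rw [hTf, if_neg (by unfold AllL; push_neg; exact ⟨l, hlc, hlD⟩), if_neg hnB]
            omega
          · exact absurd (hall v hvc (by omega)) hvD
    · -- Staller to move
      have hstep : ∀ w, w ∈ movesF G D →
          hTf c m lab (D ∪ nbr G w) + 1 ≤ hFf c m lab D := by
        intro w hw
        obtain ⟨u₀, hu₀a, hu₀D⟩ := mem_movesF.mp hw
        have hu₀D' : u₀ ∈ D ∪ nbr G w := mem_unbr.mpr (Or.inr hu₀a)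
        by_cases hA : AllL c lab D
        · have hu₀c : lab u₀ < c := by
            by_contra h; push_neg at h; exact hu₀D (hA u₀ h)
          have hA' : AllL c lab (D ∪ nbr G w) := AllL_mono hA
          have hnCS : ¬ CSub c lab D := fun h => hu₀D (h u₀ hu₀c)
          rw [hFf, if_pos hA, if_neg hnCS]
          by_cases hQ : Q1 c lab D
          · rw [if_pos hQ]
            have hCS' : CSub c lab (D ∪ nbr G w) := by
              intro z hz
              by_cases hzD : z ∈ D
              · exact Finset.mem_union_left _ hzD
              · exact (hQ z u₀ hz hzD hu₀c hu₀D) ▸ hu₀D'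
            rw [hTf, if_pos hA', if_pos hCS']
          · rw [if_neg hQ]
            rw [hTf, if_pos hA']
            have hnCE : ¬ CEmp c lab (D ∪ nbr G w) := fun h => h u₀ hu₀c hu₀D'
            split_ifs <;> omega
        · have hmu1 : 1 ≤ muL c lab D := muL_pos hA
          by_cases hCS : CSub c lab D
          · -- Staller value μ; any move dominates a new leaf
            rw [hFf, if_neg hA, if_pos hCS]
            have hu₀leaf : c ≤ lab u₀ := by
              by_contra h; push_neg at h; exact hu₀D (hCS u₀ h)
            have hwl : lab u₀ = lab w + m := adj_shape hlt hadj hu₀a hu₀leaf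
            rcases muL_dichot hadj hinj hlt D w with ⟨v', hv'1, hv'2, hv'3, hveq⟩
              | ⟨hall, heq⟩
            · by_cases hA' : AllL c lab (D ∪ nbr G w)
              · rw [hTf, if_pos hA', if_pos (CSub_mono hCS)]; omega
              · have hnB' : ¬ BigB c m lab (D ∪ nbr G w) := by
                  intro hB'
                  have hA'' := hA'
                  unfold AllL at hA''; push_neg at hA''
                  obtain ⟨l2, hl2c, hl2D⟩ := hA''
                  obtain ⟨x2, hx2⟩ := hsurj (lab l2 - m) (by have := hlt l2; omega)
                  have hx2c : lab x2 < c := by have := hlt l2; omega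
                  exact (hB' l2 hl2c hl2D x2 (by omega))
                    (Finset.mem_union_left _ (hCS x2 hx2c))
                rw [hTf, if_neg hA', if_neg hnB']
                omega
            · exact absurd (hall u₀ hu₀leaf hwl) hu₀D
          · by_cases hBS : BigB c m lab D ∧ Spos c m lab D
            · rw [hFf, if_neg hA, if_neg hCS, if_pos hBS]
              have hd : muL c lab (D ∪ nbr G w) ≤ muL c lab D :=
                muL_mono Finset.subset_union_left
              by_cases hA' : AllL c lab (D ∪ nbr G w)
              · rw [hTf, if_pos hA']; split_ifs <;> omega
              · rw [hTf, if_neg hA']; split_ifs <;> omega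
            · rw [hFf, if_neg hA, if_neg hCS, if_neg hBS]
              by_cases hA' : AllL c lab (D ∪ nbr G w)
              · have hnCE : ¬ CEmp c lab (D ∪ nbr G w) := by
                  rcases lt_or_ge (lab u₀) c with h | h
                  · exact fun hce => hce u₀ h hu₀D'
                  · have hwl : lab u₀ = lab w + m := adj_shape hlt hadj hu₀a h
                    have hwc : lab w < c := by have := hlt u₀; omega
                    obtain ⟨z, hz⟩ := hsurj (if lab w = 0 then 1 else 0)
                      (by split <;> omega)
                    have hzc : lab z < c := by
                      rcases eq_or_ne (lab w) 0 with h' | h' <;> simp [h'] at hz <;> omega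
                    have hz' : z ∈ D ∪ nbr G w := by
                      apply clique_cover hadj hwc hzc
                      rcases eq_or_ne (lab w) 0 with h' | h' <;> simp [h'] at hz <;> omega
                    exact fun hce => hce z hzc hz'
                rw [hTf, if_pos hA']
                split_ifs <;> omega
              · rcases muL_dichot hadj hinj hlt D w with ⟨v', hv'1, hv'2, hv'3, hveq⟩
                  | ⟨hall, heq⟩
                · rw [hTf, if_neg hA']; split_ifs <;> omega
                · have hnB' : ¬ BigB c m lab (D ∪ nbr G w) := by
                    intro hB'
                    have hA'' := hA'
                    unfold AllL at hA''; push_neg at hA''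
                    obtain ⟨l2, hl2c, hl2D'⟩ := hA''
                    have hl2D : l2 ∉ D := fun h => hl2D' (Finset.mem_union_left _ h)
                    obtain ⟨x2, hx2⟩ := hsurj (lab l2 - m) (by have := hlt l2; omega)
                    have hx2m : lab x2 + m = lab l2 := by omega
                    have hx2c : lab x2 < c := by have := hlt l2; omega
                    have hx2D' := hB' l2 hl2c hl2D' x2 hx2m
                    rcases lt_or_ge (lab w) c with hwc | hwc
                    · by_cases h : lab x2 = lab w
                      · exact hl2D (hall l2 hl2c (by omega))
                      · exact hx2D' (clique_cover hadj hwc hx2c h)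
                    · -- w is a leaf
                      have hwl : lab w = lab u₀ + m := adj_shape' hlt hadj hu₀a hwc
                      have hu₀c : lab u₀ < c := by have := hlt w; omega
                      by_cases hwD : w ∈ D
                      · have hS : Spos c m lab D := by
                          refine ⟨u₀, hu₀c, by omega, hu₀D, fun u hu => ?_⟩
                          have : u = w := hinj (by omega)
                          exact this ▸ hwD
                        have hnB : ¬ BigB c m lab D := fun hBB => hBS ⟨hBB, hS⟩
                        unfold BigB at hnB; push_neg at hnB
                        obtain ⟨v3, hv3c, hv3D, u3, hu3m, hu3D⟩ := hnB
                        have hv3D' : v3 ∉ D ∪ nbr G w := by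
                          intro h
                          rcases mem_unbr.mp h with h | h
                          · exact hv3D h
                          · have := adj_shape' hlt hadj h hwc
                            have := hlt w; have := hlt v3; omega
                        exact (hB' v3 hv3c hv3D' u3 hu3m)
                          (Finset.mem_union_left _ hu3D)
                      · have hwD' : w ∉ D ∪ nbr G w := by
                          intro h
                          rcases mem_unbr.mp h with h | h
                          · exact hwD h
                          · exact G.loopless.irrefl w h
                        exact (hB' w hwc hwD' u₀ (by omega)) hu₀D'
                  rw [hTf, if_neg hA', if_neg hnB']
                  omega
      obtain ⟨w₁, hw₁⟩ := hne
      have hFf1 : 1 ≤ hFf c m lab D := by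
        have := hstep w₁ hw₁; omega
      exact keyF _ hFf1 hstep

lemma hTf_pos {D : Finset V} (hnCS : ¬ CSub c lab D) : 1 ≤ hTf c m lab D := by
  rw [hTf]
  split_ifs with h1 h2
  all_goals first | omega | (have := muL_pos h1; omega)

lemma lFf_pos {D : Finset V} (hnCS : ¬ CSub c lab D) : 1 ≤ lFf c m lab D := by
  rw [lFf]
  split_ifs with h1 h2
  all_goals first | omega | (have := muL_pos h1; omega)

/-- **Lower bound** for the game values. -/
lemma LB (hm : 1 ≤ m) (hc : m + 1 ≤ c)
    (hinj : Function.Injective lab)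
    (hlt : ∀ v, lab v < c + m)
    (hsurj : ∀ i, i < c + m → ∃ v, lab v = i)
    (hadj : ∀ a b, G.Adj a b ↔
      ((lab a < c ∧ lab b < c ∧ lab a ≠ lab b) ∨
       (lab b = lab a + m ∧ c ≤ lab b) ∨ (lab a = lab b + m ∧ c ≤ lab a))) :
    ∀ n (D : Finset V), ((univ : Finset V) \ D).card < n →
      hTf c m lab D ≤ gtVal G true D ∧ lFf c m lab D ≤ gtVal G false D := by
  intro n
  induction n with
  | zero => intro D h; omega
  | succ n ih =>
    intro D hD
    by_cases hne : (movesF G D).Nonempty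
    swap
    · obtain ⟨h1, h2⟩ := endgame hm hc hsurj hlt hadj hne
      constructor
      · rw [gtVal_empty hne, hTf, if_pos h1, if_pos h2]
      · rw [gtVal_empty hne, lFf, if_pos h1, if_pos h2]
    have hIH : ∀ w, w ∈ movesF G D →
        hTf c m lab (D ∪ nbr G w) ≤ gtVal G true (D ∪ nbr G w) ∧
        lFf c m lab (D ∪ nbr G w) ≤ gtVal G false (D ∪ nbr G w) := by
      intro w hw
      exact ih _ (by have := movesF_card G D hw; omega)
    have keyT : ∀ B : ℕ,
        (∀ w, w ∈ movesF G D → B ≤ 1 + lFf c m lab (D ∪ nbr G w)) →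
        B ≤ gtVal G true D := by
      intro B hall
      rw [gtVal_true_eq hne]
      have h1 : B - 1 ≤ ((movesF G D).attach.inf' (by simpa using hne)
          fun v => gtVal G false (D ∪ nbr G v.1)) := by
        apply Finset.le_inf'
        intro v _
        have h2 := hall v.1 v.2
        have h3 := (hIH v.1 v.2).2
        omega
      omega
    have keyF : ∀ B : ℕ, ∀ w₀, w₀ ∈ movesF G D →
        B ≤ 1 + hTf c m lab (D ∪ nbr G w₀) → B ≤ gtVal G false D := by
      intro B w₀ hw₀ hB
      rw [gtVal_false_eq hne]
      have h1 : gtVal G true (D ∪ nbr G w₀) ≤ (movesF G D).attach.sup'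
          (by simpa using hne) fun v => gtVal G true (D ∪ nbr G v.1) :=
        Finset.le_sup' (fun v : {x // x ∈ movesF G D} => gtVal G true (D ∪ nbr G v.1))
          (Finset.mem_attach _ ⟨w₀, hw₀⟩)
      have h2 := (hIH w₀ hw₀).1
      omega
    constructor
    · -- Dominator to move: bound over all moves
      apply keyT
      intro w hw
      by_cases hA : AllL c lab D
      · by_cases hCS : CSub c lab D
        · obtain ⟨u, hu1, hu2⟩ := mem_movesF.mp hw
          rcases lt_or_ge (lab u) c with h | h
          · exact absurd (hCS u h) hu2
          · exact absurd (hA u h) hu2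
        · by_cases hCE : CEmp c lab D
          · rw [hTf, if_pos hA, if_neg hCS, if_pos hCE]
            -- need lFf (D ∪ nbr w) ≥ 1
            have hnCS' : ¬ CSub c lab (D ∪ nbr G w) := by
              rcases lt_or_ge (lab w) c with hwc | hwc
              · intro h
                have : w ∈ D ∪ nbr G w := h w hwc
                rcases mem_unbr.mp this with h' | h'
                · exact hCE w hwc h'
                · exact G.loopless.irrefl w h'
              · intro h
                obtain ⟨z, hz⟩ := hsurj (if lab w - m = 0 then 1 else 0)
                  (by split <;> omega)
                have hzc : lab z < c := by split at hz <;> omega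
                have : z ∈ D ∪ nbr G w := h z hzc
                rcases mem_unbr.mp this with h' | h'
                · exact hCE z hzc h'
                · have := adj_shape' hlt hadj h' hwc
                  split at hz <;> omega
            have := lFf_pos (c := c) (m := m) hnCS'
            omega
          · rw [hTf, if_pos hA, if_neg hCS, if_neg hCE]; omega
      · have hmu1 : 1 ≤ muL c lab D := muL_pos hA
        by_cases hB : BigB c m lab D
        · rw [hTf, if_neg hA, if_pos hB]
          rcases muL_dichot hadj hinj hlt D w with ⟨v', hv'1, hv'2, hv'3, hveq⟩
            | ⟨hall, heq⟩
          · -- a new leaf v' got dominated; its support is w, and w ∉ D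
            have hwc : lab w < c := by have := hlt v'; omega
            have hwD : w ∉ D := hB v' hv'1 hv'3 w (by omega)
            have hwD' : w ∉ D ∪ nbr G w := by
              intro h
              rcases mem_unbr.mp h with h' | h'
              · exact hwD h'
              · exact G.loopless.irrefl w h'
            by_cases hA' : AllL c lab (D ∪ nbr G w)
            · have : muL c lab (D ∪ nbr G w) = 0 := muL_zero_iff.mpr hA'
              have := lFf_pos (c := c) (m := m)
                (show ¬ CSub c lab (D ∪ nbr G w) from fun h => hwD' (h w hwc))
              omega
            · have hnAX : ¬ (AllX c m lab (D ∪ nbr G w) ∧ Q1 c lab (D ∪ nbr G w)) := by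
                rintro ⟨hAX, _⟩
                exact hwD' (hAX w hwc (by omega))
              rw [lFf, if_neg hA', if_neg hnAX]
              omega
          · by_cases hA' : AllL c lab (D ∪ nbr G w)
            · have h0 : muL c lab (D ∪ nbr G w) = 0 := muL_zero_iff.mpr hA'
              omega
            · rw [lFf, if_neg hA']
              split_ifs <;> omega
        · rw [hTf, if_neg hA, if_neg hB]
          rcases muL_dichot hadj hinj hlt D w with ⟨v', hv'1, hv'2, hv'3, hveq⟩
            | ⟨hall, heq⟩
          · by_cases hA' : AllL c lab (D ∪ nbr G w)
            · have h0 : muL c lab (D ∪ nbr G w) = 0 := muL_zero_iff.mpr hA'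
              omega
            · rw [lFf, if_neg hA']
              split_ifs <;> omega
          · by_cases hA' : AllL c lab (D ∪ nbr G w)
            · have h0 : muL c lab (D ∪ nbr G w) = 0 := muL_zero_iff.mpr hA'
              omega
            · rw [lFf, if_neg hA']
              split_ifs <;> omega
    · -- Staller to move: exhibit a good move
      by_cases hA : AllL c lab D
      · by_cases hCS : CSub c lab D
        · obtain ⟨w, hw⟩ := hne
          obtain ⟨u, hu1, hu2⟩ := mem_movesF.mp hw
          rcases lt_or_ge (lab u) c with h | h
          · exact absurd (hCS u h) hu2
          · exact absurd (hA u h) hu2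
        · by_cases hQ : Q1 c lab D
          · rw [lFf, if_pos hA, if_neg hCS, if_pos hQ]
            obtain ⟨w, hw⟩ := hne
            exact keyF 1 w hw (by omega)
          · rw [lFf, if_pos hA, if_neg hCS, if_neg hQ]
            unfold Q1 at hQ; push_neg at hQ
            obtain ⟨v1, v2, hv1c, hv1D, hv2c, hv2D, hv12⟩ := hQ
            have hlab12 : lab v1 ≠ lab v2 := fun h => hv12 (hinj h)
            have hw₀ : v1 ∈ movesF G D :=
              mem_movesF.mpr ⟨v2, adj_clique hadj hv1c hv2c hlab12, hv2D⟩
            apply keyF 2 v1 hw₀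
            have hv1D' : v1 ∉ D ∪ nbr G v1 := by
              intro h
              rcases mem_unbr.mp h with h' | h'
              · exact hv1D h'
              · exact G.loopless.irrefl v1 h'
            have := hTf_pos (c := c) (m := m)
              (show ¬ CSub c lab (D ∪ nbr G v1) from fun h => hv1D' (h v1 hv1c))
            omega
      · have hmu1 : 1 ≤ muL c lab D := muL_pos hA
        have hA2 := hA
        unfold AllL at hA2; push_neg at hA2
        obtain ⟨l, hlc, hlD⟩ := hA2
        by_cases hAXQ : AllX c m lab D ∧ Q1 c lab D
        · rw [lFf, if_neg hA, if_pos hAXQ]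
          obtain ⟨x, hx⟩ := hsurj (lab l - m) (by have := hlt l; omega)
          have hxm : lab x + m = lab l := by omega
          have hxc : lab x < c := by have := hlt l; omega
          have hw₀ : x ∈ movesF G D :=
            mem_movesF.mpr ⟨l, adj_leaf hadj (by omega) hlc, hlD⟩
          apply keyF _ x hw₀
          rcases muL_dichot hadj hinj hlt D x with ⟨v', hv'1, hv'2, hv'3, hveq⟩
            | ⟨hall, heq⟩
          · by_cases hA' : AllL c lab (D ∪ nbr G x)
            · have h0 : muL c lab (D ∪ nbr G x) = 0 := muL_zero_iff.mpr hA'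
              omega
            · rw [hTf, if_neg hA']
              split_ifs <;> omega
          · exact absurd (hall l hlc (by omega)) hlD
        · rw [lFf, if_neg hA, if_neg hAXQ]
          -- find an undominated clique vertex with nonzero label
          have hz : ∃ z, lab z < c ∧ z ∉ D ∧ lab z ≠ 0 := by
            by_cases hAX : AllX c m lab D
            · have hQ : ¬ Q1 c lab D := fun h => hAXQ ⟨hAX, h⟩
              unfold Q1 at hQ; push_neg at hQ
              obtain ⟨v1, v2, hv1c, hv1D, hv2c, hv2D, hv12⟩ := hQ
              have hlab12 : lab v1 ≠ lab v2 := fun h => hv12 (hinj h)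
              rcases eq_or_ne (lab v1) 0 with h0 | h0
              · exact ⟨v2, hv2c, hv2D, by omega⟩
              · exact ⟨v1, hv1c, hv1D, h0⟩
            · unfold AllX at hAX; push_neg at hAX
              obtain ⟨x, hx1, hx2, hx3⟩ := hAX
              exact ⟨x, hx1, hx3, by omega⟩
          obtain ⟨z, hzc, hzD, hz0⟩ := hz
          obtain ⟨v0, hv0⟩ := hsurj 0 (by omega)
          have hw₀ : v0 ∈ movesF G D :=
            mem_movesF.mpr ⟨z, adj_clique hadj (by omega) hzc (by omega), hzD⟩
          apply keyF _ v0 hw₀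
          rcases muL_dichot hadj hinj hlt D v0 with ⟨v', hv'1, hv'2, hv'3, hveq⟩
            | ⟨hall, heq⟩
          · omega
          · have hA' : ¬ AllL c lab (D ∪ nbr G v0) := by
              intro h
              have h0 : muL c lab (D ∪ nbr G v0) = 0 := muL_zero_iff.mpr h
              omega
            rw [hTf, if_neg hA']
            split_ifs <;> omega

/-- The game values of the clique-with-leaves model. -/
lemma model_values (hm : 1 ≤ m) (hc : m + 1 ≤ c)
    (hinj : Function.Injective lab)
    (hlt : ∀ v, lab v < c + m)
    (hsurj : ∀ i, i < c + m → ∃ v, lab v = i)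
    (hadj : ∀ a b, G.Adj a b ↔
      ((lab a < c ∧ lab b < c ∧ lab a ≠ lab b) ∨
       (lab b = lab a + m ∧ c ≤ lab b) ∨ (lab a = lab b + m ∧ c ≤ lab a))) :
    gtVal G true ∅ = m + 1 ∧ gtVal G false ∅ = m + 1 := by
  have hmu : muL c lab (∅ : Finset V) = m := by
    have h2 : ((univ.filter fun v : V => c ≤ lab v).image lab) = Finset.Ico c (c + m) := by
      ext i
      simp only [Finset.mem_image, mem_filter, mem_univ, true_and, Finset.mem_Ico]
      constructor
      · rintro ⟨v, hv, rfl⟩; exact ⟨hv, hlt v⟩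
      · rintro ⟨h1, h2⟩
        obtain ⟨v, hv⟩ := hsurj i h2
        exact ⟨v, by omega, hv⟩
    have h3 := Finset.card_image_of_injective
      (univ.filter fun v : V => c ≤ lab v) hinj
    rw [h2] at h3
    rw [Nat.card_Ico] at h3
    rw [muL]
    have h4 : (univ.filter fun v : V => c ≤ lab v ∧ v ∉ (∅ : Finset V))
        = univ.filter fun v : V => c ≤ lab v := by
      apply Finset.filter_congr
      intro v _
      simp
    rw [h4]
    omega
  have hA : ¬ AllL c lab (∅ : Finset V) := by
    obtain ⟨v, hv⟩ := hsurj c (by omega)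
    exact fun h => Finset.notMem_empty v (h v (by omega))
  have hCS : ¬ CSub c lab (∅ : Finset V) := by
    obtain ⟨v, hv⟩ := hsurj 0 (by omega)
    exact fun h => Finset.notMem_empty v (h v (by omega))
  have hB : BigB c m lab (∅ : Finset V) := fun v _ _ u _ => Finset.notMem_empty u
  have hS : ¬ Spos c m lab (∅ : Finset V) := by
    rintro ⟨x, h1, h2, h3, h4⟩
    obtain ⟨u, hu⟩ := hsurj (lab x + m) (by omega)
    exact Finset.notMem_empty u (h4 u hu)
  have hAX : ¬ AllX c m lab (∅ : Finset V) := by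
    obtain ⟨x, hx⟩ := hsurj (c - 1) (by omega)
    exact fun h => Finset.notMem_empty x (h x (by omega) (by omega))
  have hT0 : hTf c m lab (∅ : Finset V) = m + 1 := by
    rw [hTf, if_neg hA, if_pos hB, hmu]
  have hF0 : hFf c m lab (∅ : Finset V) = m + 1 := by
    rw [hFf, if_neg hA, if_neg hCS, if_neg (fun h => hS h.2), hmu]
  have hL0 : lFf c m lab (∅ : Finset V) = m + 1 := by
    rw [lFf, if_neg hA, if_neg (fun h => hAX h.1), hmu]
  have hub := UB hm hc hinj hlt hsurj hadj
    (((univ : Finset V) \ ∅).card + 1) ∅ (by omega)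
  have hlb := LB hm hc hinj hlt hsurj hadj
    (((univ : Finset V) \ ∅).card + 1) ∅ (by omega)
  constructor
  · omega
  · omega

end CliqueLeafMain2

end CliqueLeafMain

set_option maxHeartbeats 1600000 in
/-- For `k ≥ 1`, the graph `G` above satisfies
`γ_g^t(G) = γ_g^t(G − v) = k + 1` and `γ_g^t'(G) = γ_g^t'(G − v) = k + 1`,
where `v = 1` is one of the two clique vertices without a pendant leaf. -/
theorem gtD_cliqueWithLeaves (k : ℕ) (hk : 1 ≤ k) :
    gtD (cliqueWithLeaves k) = k + 1 ∧
    gtD ((cliqueWithLeaves k).induce {u | u ≠ ⟨1, by omega⟩}) = k + 1 ∧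
    gtS (cliqueWithLeaves k) = k + 1 ∧
    gtS ((cliqueWithLeaves k).induce {u | u ≠ ⟨1, by omega⟩}) = k + 1 := by
  -- the full graph: labels are the values, clique `[0, k+2)`, `m = k` leaves
  have main1 : gtVal (cliqueWithLeaves k) true ∅ = k + 1 ∧
      gtVal (cliqueWithLeaves k) false ∅ = k + 1 := by
    refine model_values (c := k + 2) (m := k)
      (lab := fun v : Fin (2 * k + 2) => (v : ℕ)) hk (by omega)
      (fun a b h => Fin.ext h) (fun v => by have := v.isLt; omega)
      (fun i hi => ⟨⟨i, by omega⟩, rfl⟩) ?_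
    intro a b
    rw [cliqueWithLeaves, SimpleGraph.fromRel_adj]
    have ha := a.isLt
    have hb := b.isLt
    have hne : a ≠ b ↔ (a : ℕ) ≠ (b : ℕ) := by
      constructor
      · intro h hh; exact h (Fin.ext hh)
      · intro h hh; exact h (by rw [hh])
    rw [hne]
    omega
  -- the graph with `v` removed: shift labels, clique `[0, k+1)`, `m = k` leaves
  have main2 : gtVal ((cliqueWithLeaves k).induce {u | u ≠ ⟨1, by omega⟩}) true ∅ = k + 1 ∧
      gtVal ((cliqueWithLeaves k).induce {u | u ≠ ⟨1, by omega⟩}) false ∅ = k + 1 := by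
    have hval : ∀ u : {u : Fin (2 * k + 2) | u ≠ ⟨1, by omega⟩}, (u.1 : ℕ) ≠ 1 := by
      intro u hu
      exact u.2 (Fin.ext hu)
    refine model_values (c := k + 1) (m := k)
      (lab := fun u : {u : Fin (2 * k + 2) | u ≠ ⟨1, by omega⟩} =>
        if (u.1 : ℕ) = 0 then 0 else (u.1 : ℕ) - 1) hk (by omega) ?_ ?_ ?_ ?_
    · intro u v h
      simp only at h
      have hu := hval u
      have hv := hval v
      apply Subtype.ext
      apply Fin.ext
      split_ifs at h <;> omega
    · intro v
      have := v.1.isLt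
      have := hval v
      split_ifs <;> omega
    · intro i hi
      rcases Nat.eq_zero_or_pos i with h0 | h1
      · refine ⟨⟨⟨0, by omega⟩, fun h => ?_⟩, by simp [h0]⟩
        have := congrArg Fin.val h
        simp at this
      · refine ⟨⟨⟨i + 1, by omega⟩, fun h => ?_⟩, ?_⟩
        · have := congrArg Fin.val h
          simp at this
          omega
        · dsimp only
          rw [if_neg (by omega)]
          omega
    · intro a b
      have haa := hval a
      have hbb := hval b
      have ha := a.1.isLt
      have hb := b.1.isLt
      simp only [SimpleGraph.comap_adj, Function.Embedding.coe_subtype,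
        cliqueWithLeaves, SimpleGraph.fromRel_adj]
      have hne : a.1 ≠ b.1 ↔ (a.1 : ℕ) ≠ (b.1 : ℕ) := by
        constructor
        · intro h hh; exact h (Fin.ext hh)
        · intro h hh; exact h (by rw [hh])
      rw [hne]
      split_ifs <;> omega
  exact ⟨main1.1, main2.1, main1.2, main2.2⟩
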